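/- (No (-2)-curve argument on Mori quartic.) Let v ≥ 1 and let x, y, p be integers with 1 ≤ p ≤ v-2, (v+3)x + 4y = p, and 2(v-1)x² + 2(v+3)xy + 4y² = -2. Then there is a contradiction; i.e., no such integers exist. Equivalently: for integers v ≥ 3, p with 1 ≤ p ≤ v-2, the quantity (p² + 8)/((v+3)² - 8(v-1)) is strictly less than 1, and x² equals this quantity, forcing x = 0, which is incompatible with the equations. -/
import Mathlib

theorem stmt_18 (v x y p : ℤ) (hv : 1 ≤ v) (hp1 : 1 ≤ p) (hp2 : p ≤ v - 2)
    (h1 : (v + 3) * x + 4 * y = p)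
    (h2 : 2 * (v - 1) * x ^ 2 + 2 * (v + 3) * x * y + 4 * y ^ 2 = -2) :
    False := by
  have key : x ^ 2 * ((v - 1) ^ 2 + 16) = p ^ 2 + 8 := by nlinarith [sq_nonneg ((v+3)*x + 4*y)]
  have hpv : p ^ 2 ≤ (v - 2) ^ 2 := by nlinarith
  have hlt : x ^ 2 < 1 := by nlinarith [sq_nonneg (v-1)]
  have hx2 : x ^ 2 = 0 := le_antisymm (by linarith) (sq_nonneg x)
  have hx : x = 0 := by exact pow_eq_zero_iff (by norm_num) |>.mp hx2
  subst hx
  nlinarith [sq_nonneg y]
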